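/- For every integer N ≥ 2, the N-bonacci polynomial P_N = X^N − X^{N−1} − ⋯ − X − 1 has exactly one real root φ_N with φ_N > 1; this root satisfies 1 < φ_N < 2, and every complex root z of P_N with z ≠ φ_N satisfies |z| < 1 (so φ_N is the dominant root). -/

import Mathlib

open Polynomial

lemma nbonacci_lt {N : ℕ} (hN : 2 ≤ N) {x y : ℝ} (hx : 1 < x) (hxy : x < y)
    (hxe : x ^ N = ∑ j ∈ Finset.range N, x ^ j)
    (hye : y ^ N = ∑ j ∈ Finset.range N, y ^ j) : False := by
  have hx0 : (0:ℝ) < x := by linarith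
  have hkey : ∑ j ∈ Finset.range N, x ^ N * y ^ j < ∑ j ∈ Finset.range N, y ^ N * x ^ j := by
    apply Finset.sum_lt_sum_of_nonempty
    · exact Finset.nonempty_range_iff.mpr (by omega)
    · intro j hj
      have hjN : j < N := Finset.mem_range.mp hj
      have e1 : x ^ N = x ^ (N - j) * x ^ j := by
        rw [← pow_add]; congr 1; omega
      have e2 : y ^ N = y ^ (N - j) * y ^ j := by
        rw [← pow_add]; congr 1; omega
      have h1 : x ^ (N - j) < y ^ (N - j) :=
        pow_lt_pow_left₀ hxy hx0.le (by omega)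
      have hy0 : (0:ℝ) < y := lt_trans hx0 hxy
      have h2 : (0:ℝ) < x ^ j * y ^ j := mul_pos (pow_pos hx0 j) (pow_pos hy0 j)
      rw [e1, e2]
      nlinarith [mul_lt_mul_of_pos_right h1 h2]
  rw [← Finset.mul_sum, ← Finset.mul_sum, ← hxe, ← hye] at hkey
  nlinarith [hkey]

theorem nbonacci_dominant_root (N : ℕ) (hN : 2 ≤ N) :
    ∃ φ : ℝ, 1 < φ ∧ φ < 2 ∧
      φ ^ N = ∑ j ∈ Finset.range N, φ ^ j ∧
      (∀ x : ℝ, 1 < x → x ^ N = ∑ j ∈ Finset.range N, x ^ j → x = φ) ∧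
      (∀ z : ℂ, z ^ N = ∑ j ∈ Finset.range N, z ^ j → z ≠ (φ : ℂ) → ‖z‖ < 1) := by
  -- the function
  set f : ℝ → ℝ := fun t => t ^ N - ∑ j ∈ Finset.range N, t ^ j with hf
  have hcont : Continuous f :=
    (continuous_pow N).sub (continuous_finset_sum _ fun i _ => continuous_pow i)
  have hf1 : f 1 = 1 - N := by simp [hf]
  have hf2 : f 2 = 1 := by
    have h := geom_sum_mul (2:ℝ) N
    simp only [hf]
    nlinarith [h]
  have h0mem : (0:ℝ) ∈ Set.Ioo (f 1) (f 2) := by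
    constructor
    · rw [hf1]
      have : (2:ℝ) ≤ N := by exact_mod_cast hN
      linarith
    · rw [hf2]; norm_num
  obtain ⟨φ, hφmem, hφ0⟩ :=
    intermediate_value_Ioo (by norm_num : (1:ℝ) ≤ 2) hcont.continuousOn h0mem
  obtain ⟨hφ1, hφ2⟩ := hφmem
  have hφeq : φ ^ N = ∑ j ∈ Finset.range N, φ ^ j := by
    have : f φ = 0 := hφ0
    simp only [hf] at this
    linarith
  have huniq : ∀ x : ℝ, 1 < x → x ^ N = ∑ j ∈ Finset.range N, x ^ j → x = φ := by
    intro x hx hxe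
    rcases lt_trichotomy x φ with h | h | h
    · exact absurd (nbonacci_lt hN hx h hxe hφeq) (by simp)
    · exact h
    · exact absurd (nbonacci_lt hN hφ1 h hφeq hxe) (by simp)
  refine ⟨φ, hφ1, hφ2, hφeq, huniq, ?_⟩
  intro z hz hne
  by_contra hb
  push_neg at hb
  set t := ‖z‖ with htdef
  have ht0 : (0:ℝ) < t := by linarith
  have htN : (0:ℝ) < t ^ N := by positivity
  -- triangle inequality: t^N ≤ ∑ t^j
  have h1 : t ^ N ≤ ∑ j ∈ Finset.range N, t ^ j := by
    calc t ^ N = ‖z ^ N‖ := by rw [norm_pow]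
    _ = ‖∑ j ∈ Finset.range N, z ^ j‖ := by rw [hz]
    _ ≤ ∑ j ∈ Finset.range N, ‖z ^ j‖ := norm_sum_le _ _
    _ = ∑ j ∈ Finset.range N, t ^ j := by simp only [norm_pow, htdef]
  -- key identity
  have h2 : z ^ N * (2 - z) = 1 := by
    linear_combination (1 - z) * hz - geom_sum_mul z N
  have h3 : t ^ N * ‖2 - z‖ = 1 := by
    have := congrArg norm h2
    rwa [norm_mul, norm_pow, norm_one] at this
  have h4 : (2:ℝ) ≤ t + ‖2 - z‖ := by
    have : ‖z + (2 - z)‖ ≤ ‖z‖ + ‖2 - z‖ := norm_add_le _ _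
    simp only [add_sub_cancel] at this
    have h2n : ‖(2:ℂ)‖ = 2 := by norm_num
    linarith [this, h2n.symm.le]
  -- from h1: t*t^N + 1 ≤ 2*t^N
  have key : (∑ j ∈ Finset.range N, t ^ j) * (t - 1) = t ^ N - 1 := geom_sum_mul t N
  have h5 : t * t ^ N + 1 ≤ 2 * t ^ N := by
    nlinarith [mul_le_mul_of_nonneg_right h1 (by linarith : (0:ℝ) ≤ t - 1)]
  -- from h4 and h3: 2*t^N ≤ t*t^N + 1
  have h6 : 2 * t ^ N ≤ t * t ^ N + 1 := by nlinarith [h4, h3, htN]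
  -- equality: t + ‖2 - z‖ = 2
  have heq : t + ‖2 - z‖ = 2 := by
    have : t ^ N * (t + ‖2 - z‖) = t ^ N * 2 := by nlinarith
    exact mul_left_cancel₀ (ne_of_gt htN) this
  -- same ray
  have hray : SameRay ℝ z (2 - z) := by
    apply sameRay_iff_norm_add.mpr
    have : z + (2 - z) = (2:ℂ) := by ring
    rw [this, heq]
    norm_num
  obtain ⟨a, b, ha, hb', hab, hz1, _⟩ := hray.exists_eq_smul_add
  have hsum : z + (2 - z) = (2:ℂ) := by ring
  rw [hsum] at hz1
  -- z is a nonneg real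
  have hzr : z = ((2 * a : ℝ) : ℂ) := by
    rw [hz1]
    rw [Complex.real_smul]
    push_cast
    ring
  set r : ℝ := 2 * a with hrdef
  have hr0 : 0 ≤ r := by positivity
  have htr : t = r := by
    rw [htdef, hzr, Complex.norm_real, Real.norm_of_nonneg hr0]
  have hr1 : 1 ≤ r := by linarith [hb, htr]
  -- real root equation
  have hre : r ^ N = ∑ j ∈ Finset.range N, r ^ j := by
    have : ((r:ℂ)) ^ N = ∑ j ∈ Finset.range N, (r:ℂ) ^ j := by rw [← hzr]; exact hz
    exact_mod_cast this
  rcases eq_or_lt_of_le hr1 with h | h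
  · -- r = 1
    rw [← h] at hre
    simp at hre
    have h2N : (2:ℝ) ≤ (N:ℝ) := by exact_mod_cast hN
    linarith [hre]
  · have := huniq r h hre
    apply hne
    rw [hzr, this]
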